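/- Let n ≥ 1, c > 0, r ∈ ℕ, and let L : W_n → ℂ be a linear functional with L(h* h) ≥ 0 for all h ∈ W_n and L(g^r_c) ≤ 1. Then for all s, t ∈ ℕ^n with ‖s+t‖₁ ≤ r: L( ((a*)^s a^t)* (a*)^s a^t ) ≤ L( a^{s+t} (a^{s+t})* ) ≤ c^{‖s+t‖₁} · (n+‖s+t‖₁−1)! / (n−1)!. -/

import Mathlib

open scoped ComplexOrder

noncomputable section

/-- The Weyl algebra `W_n`: a complex `*`-algebra generated by `a 1, …, a n` and their
adjoints, satisfying the canonical commutation relations, in which the normally ordered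
monomials `(a*)^s a^t` form a basis (this pins the algebra down up to `*`-isomorphism). -/
structure WeylAlgebra (n : ℕ) where
  carrier : Type
  [ring : Ring carrier]
  [alg : Algebra ℂ carrier]
  [starRing : StarRing carrier]
  [starModule : StarModule ℂ carrier]
  a : Fin n → carrier
  comm_aa : ∀ i j, a i * a j = a j * a i
  comm_ss : ∀ i j, star (a i) * star (a j) = star (a j) * star (a i)
  ccr : ∀ i j : Fin n, a i * star (a j) - star (a j) * a i = if i = j then 1 else 0
  basis : Module.Basis ((Fin n → ℕ) × (Fin n → ℕ)) ℂ carrier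
  basis_eq : ∀ st : (Fin n → ℕ) × (Fin n → ℕ),
    basis st = (List.ofFn fun i => star (a i) ^ st.1 i).prod *
               (List.ofFn fun i => (a i) ^ st.2 i).prod

attribute [instance] WeylAlgebra.ring WeylAlgebra.alg WeylAlgebra.starRing
  WeylAlgebra.starModule

namespace WeylAlgebra

variable {n : ℕ} (W : WeylAlgebra n)

/-- The monomial `a^t = ∏ i, (a i)^(t i)`. -/
def amon (t : Fin n → ℕ) : W.carrier := (List.ofFn fun i => W.a i ^ t i).prod

/-- The normally ordered monomial `(a*)^s a^t`. -/
def nmon (s t : Fin n → ℕ) : W.carrier :=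
  (List.ofFn fun i => star (W.a i) ^ s i).prod * (List.ofFn fun i => W.a i ^ t i).prod

/-- The `l₁`-norm of the coefficients of the (unique) normal form of `p`. -/
def l1 (p : W.carrier) : ℝ := (W.basis.repr p).sum fun _ c => ‖c‖

/-- The degree of `p`: the maximal `‖s‖₁ + ‖t‖₁` over monomials appearing in the normal
form of `p`. -/
def deg (p : W.carrier) : ℕ :=
  (W.basis.repr p).support.sup fun st => (∑ i, st.1 i) + (∑ i, st.2 i)

/-- `p` is a sum of squares, i.e. `p ∈ Σ²`. -/
def IsSOS (p : W.carrier) : Prop :=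
  ∃ (N : ℕ) (f : Fin N → W.carrier), p = ∑ i, star (f i) * f i

/-- `p ∈ Σ²_k`: `p` is a sum of squares of elements of degree at most `k`. -/
def IsSOSdeg (k : ℕ) (p : W.carrier) : Prop :=
  ∃ (N : ℕ) (f : Fin N → W.carrier), (∀ i, W.deg (f i) ≤ k) ∧ p = ∑ i, star (f i) * f i

/-- The element `g^r_c = ∑_{‖t‖₁ ≤ r} (n-1)!/(c^{‖t‖₁} (n+‖t‖₁-1)!) • a^t (a^t)*`. -/
def gpoly (c : ℝ) (r : ℕ) : W.carrier :=
  ∑ t ∈ (Fintype.piFinset fun _ : Fin n => Finset.range (r + 1)).filter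
      (fun t => ∑ i, t i ≤ r),
    ((Nat.factorial (n - 1) : ℂ) /
        ((c : ℂ) ^ (∑ i, t i) * (Nat.factorial (n + (∑ i, t i) - 1) : ℂ))) •
      (W.amon t * star (W.amon t))

/-- The value in `W` of a single letter (`Sum.inl i ↦ a i`, `Sum.inr i ↦ (a i)*`). -/
def letterVal : Fin n ⊕ Fin n → W.carrier
  | Sum.inl i => W.a i
  | Sum.inr i => star (W.a i)

/-- The value in `W` of a word (monomial) in the letters `a_1,…,a_n,a_1*,…,a_n*`. -/
def wordVal (w : List (Fin n ⊕ Fin n)) : W.carrier := (w.map W.letterVal).prod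

end WeylAlgebra

/-- The domain of the Schrödinger representation: finitely supported functions
`ℕ^n → ℂ`. -/
abbrev DSpace (n : ℕ) := (Fin n → ℕ) →₀ ℂ

/-- The number basis vector `e_m`. -/
def eVec {n : ℕ} (m : Fin n → ℕ) : DSpace n := Finsupp.single m 1

/-- The inner product `⟨f, g⟩ = ∑_m conj (f m) * g m` on `DSpace n`
(antilinear in the first argument). -/
def innerD {n : ℕ} (f g : DSpace n) : ℂ := f.sum fun m c => (starRingEnd ℂ) c * g m

/-- The Schrödinger (Fock) representation of the Weyl algebra `W` on `DSpace n`,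
specified by its action on the number basis. -/
structure Schrodinger {n : ℕ} (W : WeylAlgebra n) where
  rep : W.carrier →ₐ[ℂ] Module.End ℂ (DSpace n)
  rep_a : ∀ (i : Fin n) (m : Fin n → ℕ),
    rep (W.a i) (eVec m) =
      (Real.sqrt (m i) : ℂ) • eVec (Function.update m i (m i - 1))
  rep_astar : ∀ (i : Fin n) (m : Fin n → ℕ),
    rep (star (W.a i)) (eVec m) =
      (Real.sqrt (m i + 1) : ℂ) • eVec (Function.update m i (m i + 1))

namespace Schrodinger

variable {n : ℕ} {W : WeylAlgebra n} (S : Schrodinger W)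

/-- `π(p) ≥ 0`: the quadratic form of `π(p)` is nonnegative on the domain. -/
def PiNonneg (p : W.carrier) : Prop := ∀ φ : DSpace n, 0 ≤ innerD φ (S.rep p φ)

/-- The set of energies `⟨φ, π(p) φ⟩` over normalized `φ` in the domain. -/
def energySet (p : W.carrier) : Set ℝ :=
  { x | ∃ φ : DSpace n, innerD φ φ = 1 ∧ (innerD φ (S.rep p φ)).re = x }

/-- `λ_inf(p)`, the infimum of `⟨φ, π(p) φ⟩` over normalized `φ`. -/
def lambdaInf (p : W.carrier) : ℝ := sInf (S.energySet p)

end Schrodinger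

section AuxList

variable {M : Type*} [Monoid M]

lemma ofFn_prod_mul : ∀ {m : ℕ} (f g : Fin m → M),
    (∀ i j, Commute (g i) (f j)) →
    (List.ofFn fun i => f i * g i).prod = (List.ofFn f).prod * (List.ofFn g).prod := by
  intro m
  induction m with
  | zero => intro f g _; simp
  | succ m ih =>
    intro f g h
    rw [List.ofFn_succ, List.ofFn_succ (f := f), List.ofFn_succ (f := g),
      List.prod_cons, List.prod_cons, List.prod_cons,
      ih (fun i => f i.succ) (fun i => g i.succ) (fun i j => h _ _)]
    have hc : Commute (g 0) (List.ofFn fun i => f i.succ).prod := by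
      apply Commute.list_prod_right
      intro x hx
      obtain ⟨j, rfl⟩ := List.mem_ofFn.mp hx
      exact h 0 j.succ
    calc f 0 * g 0 * ((List.ofFn fun i => f i.succ).prod * (List.ofFn fun i => g i.succ).prod)
        = f 0 * ((g 0 * (List.ofFn fun i => f i.succ).prod) * (List.ofFn fun i => g i.succ).prod) := by
          noncomm_ring
      _ = f 0 * (((List.ofFn fun i => f i.succ).prod * g 0) * (List.ofFn fun i => g i.succ).prod) := by
          rw [hc.eq]
      _ = f 0 * (List.ofFn fun i => f i.succ).prod * (g 0 * (List.ofFn fun i => g i.succ).prod) := by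
          noncomm_ring

lemma ofFn_prod_eq_single : ∀ {m : ℕ} (f : Fin m → M) (i : Fin m),
    (∀ j, j ≠ i → f j = 1) → (List.ofFn f).prod = f i := by
  intro m
  induction m with
  | zero => exact fun f i => i.elim0
  | succ m ih =>
    intro f i h
    rw [List.ofFn_succ, List.prod_cons]
    rcases Fin.eq_zero_or_eq_succ i with hi | ⟨i', rfl⟩
    · subst hi
      have h1 : (List.ofFn fun j : Fin m => f j.succ).prod = 1 := by
        apply List.prod_eq_one
        intro x hx
        obtain ⟨j, rfl⟩ := List.mem_ofFn.mp hx
        exact h j.succ (Fin.succ_ne_zero j)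
      rw [h1, mul_one]
    · rw [h 0 (Fin.succ_ne_zero i').symm, one_mul,
        ih _ i' (fun j hj => h j.succ (fun hs => hj (Fin.succ_injective _ hs)))]

lemma star_ofFn_prod {R : Type*} [Monoid R] [StarMul R] :
    ∀ {m : ℕ} (f : Fin m → R), (∀ i j, Commute (star (f i)) (star (f j))) →
      star (List.ofFn f).prod = (List.ofFn fun i => star (f i)).prod := by
  intro m
  induction m with
  | zero => intro f _; simp
  | succ m ih =>
    intro f h
    rw [List.ofFn_succ, List.ofFn_succ (f := fun i => star (f i)), List.prod_cons,
      List.prod_cons, star_mul, ih _ (fun i j => h i.succ j.succ)]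
    exact (Commute.list_prod_left _ _ (by
      intro x hx
      obtain ⟨j, rfl⟩ := List.mem_ofFn.mp hx
      exact h j.succ 0)).eq

end AuxList

namespace WeylAlgebra

section AuxWeyl

variable {n : ℕ} (W : WeylAlgebra n)

lemma commute_aa' (i j : Fin n) : Commute (W.a i) (W.a j) := W.comm_aa i j

lemma commute_ss' (i j : Fin n) : Commute (star (W.a i)) (star (W.a j)) := W.comm_ss i j

lemma commute_as' {i j : Fin n} (h : i ≠ j) : Commute (W.a i) (star (W.a j)) := by
  have h2 := W.ccr i j
  rw [if_neg h] at h2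
  exact sub_eq_zero.mp h2

lemma ccr_self' (i : Fin n) : W.a i * star (W.a i) = star (W.a i) * W.a i + 1 := by
  have h2 := W.ccr i i
  rw [if_pos rfl] at h2
  exact sub_eq_iff_eq_add'.mp h2

lemma amon_zero : W.amon 0 = 1 := by
  simp [amon]

lemma amon_add (k l : Fin n → ℕ) : W.amon (k + l) = W.amon k * W.amon l := by
  unfold amon
  rw [← ofFn_prod_mul (fun i => W.a i ^ k i) (fun i => W.a i ^ l i)
      (fun i j => (W.commute_aa' i j).pow_pow _ _)]
  congr 1
  congr 1
  funext i
  rw [Pi.add_apply, pow_add]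

lemma amon_single (i : Fin n) : W.amon (Pi.single i 1) = W.a i := by
  unfold amon
  rw [ofFn_prod_eq_single _ i (fun j hj => by rw [Pi.single_eq_of_ne hj, pow_zero]),
    Pi.single_eq_same, pow_one]

lemma commute_a_amon (i : Fin n) (k : Fin n → ℕ) : Commute (W.a i) (W.amon k) := by
  unfold amon
  apply Commute.list_prod_right
  intro x hx
  obtain ⟨j, rfl⟩ := List.mem_ofFn.mp hx
  exact (W.commute_aa' i j).pow_right _

lemma commute_amon_star_a {i : Fin n} {k : Fin n → ℕ} (h : k i = 0) :
    Commute (W.amon k) (star (W.a i)) := by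
  unfold amon
  apply Commute.list_prod_left
  intro x hx
  obtain ⟨j, rfl⟩ := List.mem_ofFn.mp hx
  rcases eq_or_ne j i with rfl | hne
  · rw [h, pow_zero]
    exact Commute.one_left _
  · exact (W.commute_as' hne).pow_left _

lemma star_amon (k : Fin n → ℕ) :
    star (W.amon k) = (List.ofFn fun i => star (W.a i) ^ k i).prod := by
  have hcomm : ∀ i j : Fin n, Commute (star (W.a i ^ k i)) (star (W.a j ^ k j)) := by
    intro i j
    rw [star_pow, star_pow]
    exact (W.commute_ss' i j).pow_pow _ _
  unfold amon
  rw [star_ofFn_prod _ hcomm]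
  congr 1
  congr 1
  funext i
  rw [star_pow]

lemma nmon_eq (s t : Fin n → ℕ) : W.nmon s t = star (W.amon s) * W.amon t := by
  rw [star_amon]
  rfl

lemma amon_mul_star_aux (i : Fin n) :
    ∀ (m : ℕ) (k : Fin n → ℕ), k i = m →
      W.amon k * star (W.a i)
        = star (W.a i) * W.amon k + (m : ℂ) • W.amon (k - Pi.single i 1) := by
  intro m
  induction m with
  | zero =>
    intro k hk
    rw [Nat.cast_zero, zero_smul, add_zero]
    exact (W.commute_amon_star_a hk).eq
  | succ m ih =>
    intro k hk
    set k' := k - Pi.single i 1 with hk'def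
    have hk'i : k' i = m := by
      simp [hk'def, hk]
    have hk'add : k' + Pi.single i 1 = k := by
      funext j
      rcases eq_or_ne j i with rfl | hne
      · simp [hk'def, hk]
      · simp [hk'def, Pi.single_eq_of_ne hne]
    have hsplit : W.amon k = W.amon k' * W.a i := by
      rw [← hk'add, amon_add, amon_single]
    have hstep : (m : ℂ) • (W.amon (k' - Pi.single i 1) * W.a i) = (m : ℂ) • W.amon k' := by
      cases m with
      | zero => rw [Nat.cast_zero, zero_smul, zero_smul]
      | succ m' =>
        congr 1
        have hadd : (k' - Pi.single i 1) + Pi.single i 1 = k' := by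
          funext j
          rcases eq_or_ne j i with rfl | hne
          · simp [hk'i]
          · simp [Pi.single_eq_of_ne hne]
        rw [← W.amon_single i, ← amon_add, hadd]
    calc W.amon k * star (W.a i)
        = W.amon k' * (W.a i * star (W.a i)) := by rw [hsplit, mul_assoc]
      _ = W.amon k' * (star (W.a i) * W.a i) + W.amon k' := by
          rw [W.ccr_self' i, mul_add, mul_one]
      _ = (W.amon k' * star (W.a i)) * W.a i + W.amon k' := by rw [mul_assoc]
      _ = (star (W.a i) * W.amon k' + (m : ℂ) • W.amon (k' - Pi.single i 1)) * W.a i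
            + W.amon k' := by rw [ih k' hk'i]
      _ = star (W.a i) * (W.amon k' * W.a i)
            + ((m : ℂ) • (W.amon (k' - Pi.single i 1) * W.a i) + W.amon k') := by
          rw [add_mul, smul_mul_assoc, mul_assoc, add_assoc]
      _ = star (W.a i) * W.amon k + ((m : ℂ) • W.amon k' + W.amon k') := by
          rw [hstep, ← hsplit]
      _ = star (W.a i) * W.amon k + ((m + 1 : ℕ) : ℂ) • W.amon k' := by
          rw [Nat.cast_succ, add_smul, one_smul]

lemma amon_mul_star (k : Fin n → ℕ) (i : Fin n) :
    W.amon k * star (W.a i)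
      = star (W.a i) * W.amon k + ((k i : ℕ) : ℂ) • W.amon (k - Pi.single i 1) :=
  W.amon_mul_star_aux i (k i) k rfl

lemma a_mul_star_amon (k : Fin n → ℕ) (i : Fin n) :
    W.a i * star (W.amon k)
      = star (W.amon k) * W.a i + ((k i : ℕ) : ℂ) • star (W.amon (k - Pi.single i 1)) := by
  have h := congrArg star (W.amon_mul_star k i)
  simp only [star_mul, star_star, star_add, star_smul, star_natCast] at h
  exact h

lemma conj_star_id (k : Fin n → ℕ) (i : Fin n) :
    star (W.a i) * (star (W.amon k) * W.amon k) * W.a i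
      = star (W.amon (k + Pi.single i 1)) * W.amon (k + Pi.single i 1) := by
  have h1 : W.amon (k + Pi.single i 1) = W.amon k * W.a i := by
    rw [amon_add, amon_single]
  rw [h1, star_mul]
  noncomm_ring

lemma conj_a_id (k : Fin n → ℕ) (i : Fin n) :
    W.a i * (star (W.amon k) * W.amon k) * star (W.a i)
      = star (W.amon (k + Pi.single i 1)) * W.amon (k + Pi.single i 1)
        + ((2 * k i + 1 : ℕ) : ℂ) • (star (W.amon k) * W.amon k)
        + ((k i * k i : ℕ) : ℂ)
            • (star (W.amon (k - Pi.single i 1)) * W.amon (k - Pi.single i 1)) := by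
  have hAp : W.amon (k + Pi.single i 1) = W.amon k * W.a i := by
    rw [amon_add, amon_single]
  have hApstar : star (W.amon (k + Pi.single i 1)) = star (W.a i) * star (W.amon k) := by
    rw [hAp, star_mul]
  have hcomSA : star (W.amon k) * star (W.a i) = star (W.a i) * star (W.amon k) := by
    rw [← star_mul, ← star_mul, (W.commute_a_amon i k).eq]
  have hT1 : star (W.amon k) * W.a i * (star (W.a i) * W.amon k)
      = star (W.amon (k + Pi.single i 1)) * W.amon (k + Pi.single i 1)
        + star (W.amon k) * W.amon k := by
    calc star (W.amon k) * W.a i * (star (W.a i) * W.amon k)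
        = star (W.amon k) * (W.a i * star (W.a i)) * W.amon k := by noncomm_ring
      _ = star (W.amon k) * (star (W.a i) * W.a i) * W.amon k
            + star (W.amon k) * W.amon k := by
          rw [W.ccr_self' i]; noncomm_ring
      _ = (star (W.amon k) * star (W.a i)) * (W.a i * W.amon k)
            + star (W.amon k) * W.amon k := by noncomm_ring
      _ = (star (W.a i) * star (W.amon k)) * (W.amon k * W.a i)
            + star (W.amon k) * W.amon k := by
          rw [hcomSA, (W.commute_a_amon i k).eq]
      _ = star (W.amon (k + Pi.single i 1)) * W.amon (k + Pi.single i 1)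
            + star (W.amon k) * W.amon k := by rw [hApstar, hAp]
  have hT2 : ((k i : ℕ) : ℂ) • (star (W.amon k) * W.a i * W.amon (k - Pi.single i 1))
      = ((k i : ℕ) : ℂ) • (star (W.amon k) * W.amon k) := by
    rcases Nat.eq_zero_or_pos (k i) with h0 | h0
    · rw [h0, Nat.cast_zero, zero_smul, zero_smul]
    · congr 1
      have hadd : (k - Pi.single i 1) + Pi.single i 1 = k := by
        funext j
        rcases eq_or_ne j i with rfl | hne
        · simp; omega
        · simp [Pi.single_eq_of_ne hne]
      rw [mul_assoc, (W.commute_a_amon i _).eq, ← mul_assoc, mul_assoc,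
        ← W.amon_single i, ← amon_add, hadd]
  have hT3 : ((k i : ℕ) : ℂ)
        • (star (W.amon (k - Pi.single i 1)) * (star (W.a i) * W.amon k))
      = ((k i : ℕ) : ℂ) • (star (W.amon k) * W.amon k) := by
    rcases Nat.eq_zero_or_pos (k i) with h0 | h0
    · rw [h0, Nat.cast_zero, zero_smul, zero_smul]
    · congr 1
      have hadd : (k - Pi.single i 1) + Pi.single i 1 = k := by
        funext j
        rcases eq_or_ne j i with rfl | hne
        · simp; omega
        · simp [Pi.single_eq_of_ne hne]
      have hSA : star (W.amon (k - Pi.single i 1)) * star (W.a i) = star (W.amon k) := by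
        rw [← star_mul, (W.commute_a_amon i _).eq, ← W.amon_single i, ← amon_add, hadd]
      rw [← mul_assoc, hSA]
  have expand : ∀ (X1 X2 Y1 Y2 : W.carrier) (κ : ℂ),
      (X1 + κ • X2) * (Y1 + κ • Y2)
        = X1 * Y1 + κ • (X1 * Y2) + κ • (X2 * Y1) + (κ * κ) • (X2 * Y2) := by
    intro X1 X2 Y1 Y2 κ
    simp only [mul_add, add_mul, smul_add, smul_mul_assoc, mul_smul_comm, smul_smul]
    abel
  calc W.a i * (star (W.amon k) * W.amon k) * star (W.a i)
      = (W.a i * star (W.amon k)) * (W.amon k * star (W.a i)) := by noncomm_ring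
    _ = (star (W.amon k) * W.a i
            + ((k i : ℕ) : ℂ) • star (W.amon (k - Pi.single i 1)))
          * (star (W.a i) * W.amon k
            + ((k i : ℕ) : ℂ) • W.amon (k - Pi.single i 1)) := by
        rw [W.a_mul_star_amon k i, W.amon_mul_star k i]
    _ = star (W.amon k) * W.a i * (star (W.a i) * W.amon k)
          + ((k i : ℕ) : ℂ) • (star (W.amon k) * W.a i * W.amon (k - Pi.single i 1))
          + ((k i : ℕ) : ℂ)
              • (star (W.amon (k - Pi.single i 1)) * (star (W.a i) * W.amon k))
          + (((k i : ℕ) : ℂ) * ((k i : ℕ) : ℂ))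
              • (star (W.amon (k - Pi.single i 1)) * W.amon (k - Pi.single i 1)) := by
        rw [expand]
    _ = star (W.amon (k + Pi.single i 1)) * W.amon (k + Pi.single i 1)
          + ((2 * k i + 1 : ℕ) : ℂ) • (star (W.amon k) * W.amon k)
          + ((k i * k i : ℕ) : ℂ)
              • (star (W.amon (k - Pi.single i 1)) * W.amon (k - Pi.single i 1)) := by
        rw [hT2, hT3, hT1]
        push_cast
        module

end AuxWeyl

end WeylAlgebra

namespace WeylAlgebra

section Cone

variable {n : ℕ} (W : WeylAlgebra n)

/-- The cone of nonnegative combinations of squares `(a^k)* a^k`. -/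
def cone : AddSubmonoid W.carrier :=
  AddSubmonoid.closure
    {x | ∃ c : ℝ, 0 ≤ c ∧ ∃ k : Fin n → ℕ, x = (c : ℂ) • (star (W.amon k) * W.amon k)}

lemma gen_mem_cone (c : ℝ) (hc : 0 ≤ c) (k : Fin n → ℕ) :
    (c : ℂ) • (star (W.amon k) * W.amon k) ∈ W.cone :=
  AddSubmonoid.subset_closure ⟨c, hc, k, rfl⟩

lemma base_mem_cone (k : Fin n → ℕ) : star (W.amon k) * W.amon k ∈ W.cone := by
  have h := W.gen_mem_cone 1 zero_le_one k
  rwa [Complex.ofReal_one, one_smul] at h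

lemma nat_smul_mem_cone (c : ℝ) (hc : 0 ≤ c) (m : ℕ) (k : Fin n → ℕ) :
    (c : ℂ) • ((m : ℂ) • (star (W.amon k) * W.amon k)) ∈ W.cone := by
  have h : (c : ℂ) • ((m : ℂ) • (star (W.amon k) * W.amon k))
      = ((c * m : ℝ) : ℂ) • (star (W.amon k) * W.amon k) := by
    rw [smul_smul]
    norm_cast
  rw [h]
  exact W.gen_mem_cone _ (mul_nonneg hc (Nat.cast_nonneg _)) _

lemma cone_conj_star (i : Fin n) {x : W.carrier} (hx : x ∈ W.cone) :
    star (W.a i) * x * W.a i ∈ W.cone := by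
  refine AddSubmonoid.closure_induction ?_ ?_ ?_ hx
  · rintro x ⟨c, hc, k, rfl⟩
    rw [mul_smul_comm, smul_mul_assoc, W.conj_star_id k i]
    exact W.gen_mem_cone c hc _
  · rw [mul_zero, zero_mul]
    exact zero_mem _
  · intro x y _ _ px py
    rw [mul_add, add_mul]
    exact add_mem px py

lemma cone_conj_a (i : Fin n) {x : W.carrier} (hx : x ∈ W.cone) :
    W.a i * x * star (W.a i) ∈ W.cone := by
  refine AddSubmonoid.closure_induction ?_ ?_ ?_ hx
  · rintro x ⟨c, hc, k, rfl⟩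
    rw [mul_smul_comm, smul_mul_assoc, W.conj_a_id k i, smul_add, smul_add]
    exact add_mem (add_mem (W.gen_mem_cone c hc _) (W.nat_smul_mem_cone c hc _ _))
      (W.nat_smul_mem_cone c hc _ _)
  · rw [mul_zero, zero_mul]
    exact zero_mem _
  · intro x y _ _ px py
    rw [mul_add, add_mul]
    exact add_mem px py

lemma cone_conj_diff (i : Fin n) {x : W.carrier} (hx : x ∈ W.cone) :
    W.a i * x * star (W.a i) - star (W.a i) * x * W.a i ∈ W.cone := by
  refine AddSubmonoid.closure_induction ?_ ?_ ?_ hx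
  · rintro x ⟨c, hc, k, rfl⟩
    have h : W.a i * ((c : ℂ) • (star (W.amon k) * W.amon k)) * star (W.a i)
        - star (W.a i) * ((c : ℂ) • (star (W.amon k) * W.amon k)) * W.a i
        = (c : ℂ) • (((2 * k i + 1 : ℕ) : ℂ) • (star (W.amon k) * W.amon k))
          + (c : ℂ) • (((k i * k i : ℕ) : ℂ)
              • (star (W.amon (k - Pi.single i 1)) * W.amon (k - Pi.single i 1))) := by
      rw [mul_smul_comm, smul_mul_assoc, mul_smul_comm, smul_mul_assoc, ← smul_sub,
        W.conj_a_id k i, W.conj_star_id k i, ← smul_add]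
      congr 1
      abel
    rw [h]
    exact add_mem (W.nat_smul_mem_cone c hc _ _) (W.nat_smul_mem_cone c hc _ _)
  · rw [mul_zero, zero_mul, mul_zero, zero_mul, sub_zero]
    exact zero_mem _
  · intro x y _ _ px py
    have h : W.a i * (x + y) * star (W.a i) - star (W.a i) * (x + y) * W.a i
        = (W.a i * x * star (W.a i) - star (W.a i) * x * W.a i)
          + (W.a i * y * star (W.a i) - star (W.a i) * y * W.a i) := by
      noncomm_ring
    rw [h]
    exact add_mem px py

lemma cone_L_nonneg (L : W.carrier →ₗ[ℂ] ℂ) (hpos : ∀ h : W.carrier, 0 ≤ L (star h * h))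
    {x : W.carrier} (hx : x ∈ W.cone) : 0 ≤ L x := by
  refine AddSubmonoid.closure_induction ?_ ?_ ?_ hx
  · rintro x ⟨c, hc, k, rfl⟩
    rw [map_smul, smul_eq_mul]
    exact mul_nonneg (Complex.zero_le_real.mpr hc) (hpos _)
  · rw [map_zero]
  · intro x y _ _ px py
    rw [map_add]
    exact add_nonneg px py

lemma conj_a_form (u : Fin n → ℕ) (i : Fin n) :
    W.amon (u + Pi.single i 1) * star (W.amon (u + Pi.single i 1))
      = W.a i * (W.amon u * star (W.amon u)) * star (W.a i) := by
  have h1 : W.amon u * W.a i = W.a i * W.amon u := (W.commute_a_amon i u).eq.symm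
  have h2 : star (W.a i) * star (W.amon u) = star (W.amon u) * star (W.a i) := by
    rw [← star_mul, ← star_mul, (W.commute_a_amon i u).eq]
  rw [amon_add, amon_single]
  calc W.amon u * W.a i * star (W.amon u * W.a i)
      = W.amon u * W.a i * (star (W.a i) * star (W.amon u)) := by rw [star_mul]
    _ = W.a i * W.amon u * (star (W.amon u) * star (W.a i)) := by rw [h1, h2]
    _ = W.a i * (W.amon u * star (W.amon u)) * star (W.a i) := by noncomm_ring

lemma amon_star_mem_cone :
    ∀ (m : ℕ) (s : Fin n → ℕ), (∑ i, s i) = m → W.amon s * star (W.amon s) ∈ W.cone := by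
  intro m
  induction m with
  | zero =>
    intro s hs
    have hs0 : s = 0 := funext fun i =>
      (Finset.sum_eq_zero_iff.mp hs) i (Finset.mem_univ i)
    subst hs0
    rw [amon_zero, star_one, one_mul]
    have h := W.base_mem_cone 0
    rwa [amon_zero, star_one, one_mul] at h
  | succ m ih =>
    intro s hs
    obtain ⟨i, _, hi⟩ := Finset.exists_ne_zero_of_sum_ne_zero
      (by rw [hs]; exact Nat.succ_ne_zero m)
    set s' := s - Pi.single i 1 with hs'def
    have hs'add : s' + Pi.single i 1 = s := by
      funext j
      rcases eq_or_ne j i with rfl | hne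
      · rw [hs'def]
        simp only [Pi.add_apply, Pi.sub_apply, Pi.single_eq_same]
        omega
      · rw [hs'def]
        simp [Pi.single_eq_of_ne hne]
    have hsum' : ∑ j, s' j = m := by
      have h1 : ∑ j, s j = (∑ j, s' j) + 1 := by
        rw [← hs'add]
        simp only [Pi.add_apply]
        rw [Finset.sum_add_distrib, Finset.sum_pi_single']
        simp
      omega
    rw [← hs'add, W.conj_a_form s' i]
    exact W.cone_conj_a i (ih s' hsum')

lemma chain_mem :
    ∀ (m : ℕ) (s t : Fin n → ℕ), (∑ i, t i) = m →
      star (W.amon t) * (W.amon s * star (W.amon s)) * W.amon t ∈ W.cone ∧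
      W.amon (s + t) * star (W.amon (s + t))
        - star (W.amon t) * (W.amon s * star (W.amon s)) * W.amon t ∈ W.cone := by
  intro m
  induction m with
  | zero =>
    intro s t ht
    have ht0 : t = 0 := funext fun i =>
      (Finset.sum_eq_zero_iff.mp ht) i (Finset.mem_univ i)
    subst ht0
    rw [amon_zero, star_one, mul_one, one_mul, add_zero]
    exact ⟨W.amon_star_mem_cone (∑ i, s i) s rfl, by rw [sub_self]; exact zero_mem _⟩
  | succ m ih =>
    intro s t ht
    obtain ⟨i, _, hi⟩ := Finset.exists_ne_zero_of_sum_ne_zero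
      (by rw [ht]; exact Nat.succ_ne_zero m)
    set t' := t - Pi.single i 1 with ht'def
    have ht'add : t' + Pi.single i 1 = t := by
      funext j
      rcases eq_or_ne j i with rfl | hne
      · rw [ht'def]
        simp only [Pi.add_apply, Pi.sub_apply, Pi.single_eq_same]
        omega
      · rw [ht'def]
        simp [Pi.single_eq_of_ne hne]
    have hsum' : ∑ j, t' j = m := by
      have h1 : ∑ j, t j = (∑ j, t' j) + 1 := by
        rw [← ht'add]
        simp only [Pi.add_apply]
        rw [Finset.sum_add_distrib, Finset.sum_pi_single']
        simp
      omega
    obtain ⟨hX', hD'⟩ := ih s t' hsum'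
    have h1 : star (W.amon t) * (W.amon s * star (W.amon s)) * W.amon t
        = star (W.a i)
            * (star (W.amon t') * (W.amon s * star (W.amon s)) * W.amon t') * W.a i := by
      rw [← ht'add, amon_add, amon_single, star_mul]
      noncomm_ring
    have h2 : W.amon (s + t) * star (W.amon (s + t))
        = W.a i * (W.amon (s + t') * star (W.amon (s + t'))) * star (W.a i) := by
      have hst : s + t = (s + t') + Pi.single i 1 := by
        rw [← ht'add, add_assoc]
      rw [hst, W.conj_a_form (s + t') i]
    constructor
    · rw [h1]
      exact W.cone_conj_star i hX'
    · rw [h1, h2]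
      set X' := star (W.amon t') * (W.amon s * star (W.amon s)) * W.amon t' with hX'def
      set Y' := W.amon (s + t') * star (W.amon (s + t')) with hY'def
      have h3 : W.a i * Y' * star (W.a i) - star (W.a i) * X' * W.a i
          = W.a i * (Y' - X') * star (W.a i)
            + (W.a i * X' * star (W.a i) - star (W.a i) * X' * W.a i) := by
        noncomm_ring
      rw [h3]
      exact add_mem (W.cone_conj_a i hD') (W.cone_conj_diff i hX')

end Cone

end WeylAlgebra

/-- If `L` is a positive linear functional with `L(g^r_c) ≤ 1`, then
for `‖s+t‖₁ ≤ r` one has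
`L(((a*)^s a^t)* (a*)^s a^t) ≤ L(a^{s+t}(a^{s+t})*) ≤ c^{‖s+t‖₁}·(n+‖s+t‖₁-1)!/(n-1)!`. -/
theorem moment_matrix_diag_bound {n : ℕ} (hn : 1 ≤ n) (c : ℝ) (hc : 0 < c) (r : ℕ)
    (W : WeylAlgebra n) (L : W.carrier →ₗ[ℂ] ℂ)
    (hpos : ∀ h : W.carrier, 0 ≤ L (star h * h))
    (hg : L (W.gpoly c r) ≤ 1)
    (s t : Fin n → ℕ) (hst : ∑ i, (s i + t i) ≤ r) :
    L (star (W.nmon s t) * W.nmon s t) ≤ L (W.amon (s + t) * star (W.amon (s + t))) ∧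
    L (W.amon (s + t) * star (W.amon (s + t))) ≤
      (c : ℂ) ^ (∑ i, (s i + t i)) *
        (Nat.factorial (n + (∑ i, (s i + t i)) - 1) : ℂ) /
        (Nat.factorial (n - 1) : ℂ) := by
  classical
  have hM : (∑ i, (s + t) i) = ∑ i, (s i + t i) := by
    simp [Pi.add_apply]
  -- Part 1
  obtain ⟨hX, hD⟩ := W.chain_mem (∑ i, t i) s t rfl
  have h1 : L (star (W.nmon s t) * W.nmon s t)
      ≤ L (W.amon (s + t) * star (W.amon (s + t))) := by
    have hXid : star (W.nmon s t) * W.nmon s t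
        = star (W.amon t) * (W.amon s * star (W.amon s)) * W.amon t := by
      rw [W.nmon_eq, star_mul, star_star]
      noncomm_ring
    have hnn := W.cone_L_nonneg L hpos hD
    rw [map_sub] at hnn
    rw [hXid]
    exact sub_nonneg.mp hnn
  refine ⟨h1, ?_⟩
  -- Part 2
  have hterm : ∀ u : Fin n → ℕ, 0 ≤ L (W.amon u * star (W.amon u)) := by
    intro u
    have h := hpos (star (W.amon u))
    rwa [star_star] at h
  set F := (Fintype.piFinset fun _ : Fin n => Finset.range (r + 1)).filter
      (fun u => ∑ i, u i ≤ r) with hF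
  set dR : (Fin n → ℕ) → ℝ := fun u =>
    (Nat.factorial (n - 1) : ℝ) /
      (c ^ (∑ i, u i) * (Nat.factorial (n + (∑ i, u i) - 1) : ℝ)) with hdR
  have hdRpos : ∀ u, 0 < dR u := fun u =>
    div_pos (Nat.cast_pos.mpr (Nat.factorial_pos _))
      (mul_pos (pow_pos hc _) (Nat.cast_pos.mpr (Nat.factorial_pos _)))
  have hLg : L (W.gpoly c r)
      = ∑ u ∈ F, ((dR u : ℝ) : ℂ) * L (W.amon u * star (W.amon u)) := by
    rw [WeylAlgebra.gpoly, map_sum]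
    refine Finset.sum_congr rfl fun u _ => ?_
    rw [map_smul, smul_eq_mul]
    congr 1
    rw [hdR]
    push_cast
    ring
  have hvF : (s + t) ∈ F := by
    rw [hF, Finset.mem_filter]
    refine ⟨?_, by rw [hM]; exact hst⟩
    rw [Fintype.mem_piFinset]
    intro i
    rw [Finset.mem_range, Nat.lt_succ_iff]
    calc (s + t) i ≤ ∑ j, (s + t) j :=
          Finset.single_le_sum (fun j _ => Nat.zero_le _) (Finset.mem_univ i)
      _ ≤ r := by rw [hM]; exact hst
  have hle1 : ((dR (s + t) : ℝ) : ℂ) * L (W.amon (s + t) * star (W.amon (s + t))) ≤ 1 := by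
    calc ((dR (s + t) : ℝ) : ℂ) * L (W.amon (s + t) * star (W.amon (s + t)))
        ≤ ∑ u ∈ F, ((dR u : ℝ) : ℂ) * L (W.amon u * star (W.amon u)) := by
          refine Finset.single_le_sum (f := fun u => ((dR u : ℝ) : ℂ) * L (W.amon u * star (W.amon u))) (fun u _ => ?_) hvF
          exact mul_nonneg (Complex.zero_le_real.mpr (hdRpos u).le) (hterm u)
      _ = L (W.gpoly c r) := hLg.symm
      _ ≤ 1 := hg
  have h0 := hterm (s + t)
  set x := (L (W.amon (s + t) * star (W.amon (s + t)))).re with hx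
  have hLvre : L (W.amon (s + t) * star (W.amon (s + t))) = (x : ℂ) := by
    apply Complex.ext
    · rw [Complex.ofReal_re]
    · rw [Complex.ofReal_im]
      exact ((Complex.le_def.mp h0).2).symm.trans Complex.zero_im
  have hreal : dR (s + t) * x ≤ 1 := by
    rw [hLvre, ← Complex.ofReal_mul, show (1 : ℂ) = ((1 : ℝ) : ℂ) from by norm_num,
      Complex.real_le_real] at hle1
    exact hle1
  have hfin : x ≤ c ^ (∑ i, (s i + t i))
      * (Nat.factorial (n + (∑ i, (s i + t i)) - 1) : ℝ) / (Nat.factorial (n - 1) : ℝ) := by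
    have hd := hdRpos (s + t)
    have h2 : x ≤ 1 / dR (s + t) := by
      rw [le_div_iff₀ hd]
      linarith [hreal]
    refine h2.trans (le_of_eq ?_)
    simp only [hdR]
    rw [one_div_div, hM]
  rw [hLvre]
  have hcast : ((c ^ (∑ i, (s i + t i))
      * (Nat.factorial (n + (∑ i, (s i + t i)) - 1) : ℝ) / (Nat.factorial (n - 1) : ℝ) : ℝ) : ℂ)
      = (c : ℂ) ^ (∑ i, (s i + t i)) *
        (Nat.factorial (n + (∑ i, (s i + t i)) - 1) : ℂ) /
        (Nat.factorial (n - 1) : ℂ) := by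
    push_cast
    ring
  rw [← hcast]
  exact Complex.real_le_real.mpr hfin
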